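/- If Sieve fails, a bad cycle exists: let G be a finite directed graph with edge labels Dec, Inc. If the Sieve procedure terminates with a graph still containing a cycle, then the original graph G contains a cycle such that every variable decremented by some edge of the cycle is also incremented by some edge of the cycle. -/

import Mathlib

section Aux
variable {V ι : Type*} (src tgt : ι → V)

/-- `L` is a walk from `a` to `b` using only edges in `T`. -/
def sieveWalk (T : Set ι) : List ι → V → V → Prop
  | [], a, b => a = b
  | e :: L, a, b => e ∈ T ∧ src e = a ∧ sieveWalk T L (tgt e) b

variable {src tgt}

lemma sieveWalk_append {T : Set ι} : ∀ {L M : List ι} {a b c : V},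
    sieveWalk src tgt T L a b → sieveWalk src tgt T M b c →
    sieveWalk src tgt T (L ++ M) a c
  | [], M, a, b, c, h1, h2 => by
      simp only [sieveWalk] at h1; subst h1; simpa using h2
  | e :: L, M, a, b, c, h1, h2 => ⟨h1.1, h1.2.1, sieveWalk_append h1.2.2 h2⟩

lemma sieveWalk_mem {T : Set ι} : ∀ {L : List ι} {a b : V},
    sieveWalk src tgt T L a b → ∀ e ∈ L, e ∈ T
  | [], a, b, _, e, he => by simp at he
  | f :: L, a, b, h, e, he => by
      rcases List.mem_cons.1 he with h' | h'
      · exact h' ▸ h.1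
      · exact sieveWalk_mem h.2.2 e h'

lemma sieveWalk_src {T : Set ι} : ∀ {L : List ι} {a b : V},
    sieveWalk src tgt T L a b → ∀ (h : 0 < L.length), src (L.get ⟨0, h⟩) = a
  | [], a, b, _, h => by simp at h
  | e :: L, a, b, hw, h => hw.2.1

lemma sieveWalk_tgt {T : Set ι} : ∀ {L : List ι} {a b : V},
    sieveWalk src tgt T L a b → ∀ (h : 0 < L.length),
      tgt (L.get ⟨L.length - 1, by omega⟩) = b
  | [], a, b, _, h => by simp at h
  | e :: L, a, b, hw, h => by
      cases L with
      | nil => simpa [sieveWalk] using hw.2.2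
      | cons f M =>
          have := sieveWalk_tgt hw.2.2 (by simp)
          simpa using this

lemma sieveWalk_chain {T : Set ι} : ∀ {L : List ι} {a b : V},
    sieveWalk src tgt T L a b → ∀ (j : ℕ) (h : j + 1 < L.length),
      tgt (L.get ⟨j, by omega⟩) = src (L.get ⟨j + 1, h⟩)
  | [], a, b, _, j, h => by simp at h
  | e :: L, a, b, hw, j, h => by
      cases j with
      | zero =>
          have h0 : 0 < L.length := by simpa using h
          have := sieveWalk_src hw.2.2 h0
          simpa using this.symm
      | succ j =>
          have := sieveWalk_chain hw.2.2 j (by simpa using h)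
          simpa using this

end Aux

/-- One-step reachability along the edges of the subgraph `H`. -/
def sieveReach {V ι : Type*} (src tgt : ι → V) (H : Finset ι) : V → V → Prop :=
  Relation.ReflTransGen (fun a b => ∃ e ∈ H, src e = a ∧ tgt e = b)

/-- Edge `e` lies inside a strongly connected component of the subgraph `H`:
it belongs to `H` and its endpoints are mutually reachable in `H`. -/
def sieveInside {V ι : Type*} (src tgt : ι → V) (H : Finset ι) (e : ι) : Prop :=
  e ∈ H ∧ sieveReach src tgt H (tgt e) (src e)

/-- Edges `e` and `e'` lie inside the same strongly connected component of `H`. -/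
def sieveSameC {V ι : Type*} (src tgt : ι → V) (H : Finset ι) (e e' : ι) : Prop :=
  sieveInside src tgt H e ∧ sieveInside src tgt H e' ∧
    sieveReach src tgt H (src e) (src e') ∧ sieveReach src tgt H (src e') (src e)

/-- One iteration of the Sieve procedure: pick an SCC `C` (the component of an edge `e₀`)
and a variable `X` decremented by some edge inside `C` and incremented by no edge inside
`C`; remove all edges inside `C` that decrement `X`. -/
def sieveStep {V ι Var : Type*} (src tgt : ι → V) (Dec Inc : ι → Finset Var)
    (H H' : Finset ι) : Prop :=
  ∃ (X : Var) (e₀ : ι), sieveInside src tgt H e₀ ∧ X ∈ Dec e₀ ∧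
    (∀ e, sieveSameC src tgt H e₀ e → X ∉ Inc e) ∧
    (∀ e, e ∈ H' ↔ e ∈ H ∧ ¬ (sieveSameC src tgt H e₀ e ∧ X ∈ Dec e))

/-- If Sieve fails, a bad cycle exists. If the Sieve procedure (run from
the full edge set) terminates with a graph that still contains a cycle (some edge lies
inside an SCC), then the original graph contains a cycle such that every variable
decremented by some edge of the cycle is also incremented by some edge of the cycle. -/
theorem stmt9 {V ι Var : Type*} [Fintype V] [Fintype ι] [Fintype Var]
    (src tgt : ι → V) (Dec Inc : ι → Finset Var)
    (n : ℕ) (H : ℕ → Finset ι) (h0 : H 0 = Finset.univ)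
    (hstep : ∀ i < n, sieveStep src tgt Dec Inc (H i) (H (i + 1)))
    (hstuck : ∀ H' : Finset ι, ¬ sieveStep src tgt Dec Inc (H n) H')
    (hcyclic : ∃ e : ι, sieveInside src tgt (H n) e) :
    ∃ (k : ℕ), 0 < k ∧ ∃ c : ℕ → ι, (∀ i, c (i + k) = c i) ∧
      (∀ i, tgt (c i) = src (c (i + 1))) ∧
      ∀ X : Var, (∃ i, X ∈ Dec (c i)) → ∃ j, X ∈ Inc (c j) := by
  classical
  obtain ⟨e₀, he₀⟩ := hcyclic
  set Hn := H n with hHn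
  -- the SCC of e₀, as a set of edges
  set T : Set ι := {e | sieveSameC src tgt Hn e₀ e} with hT
  have he₀T : e₀ ∈ T := ⟨he₀, he₀, Relation.ReflTransGen.refl, Relation.ReflTransGen.refl⟩
  -- Reachability inside the SCC
  have key : ∀ b, sieveReach src tgt Hn b (src e₀) → ∀ a, sieveReach src tgt Hn a b →
      sieveReach src tgt Hn (src e₀) a →
      Relation.ReflTransGen (fun x y => ∃ e ∈ T, src e = x ∧ tgt e = y) a b := by
    intro b hb a hab
    induction hab using Relation.ReflTransGen.head_induction_on with
    | refl => intro _; exact Relation.ReflTransGen.refl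
    | head h' hrest ih =>
        intro ha
        obtain ⟨e, heH, he1, he2⟩ := h'
        rename_i a' c'
        have hca : sieveReach src tgt Hn c' (src e₀) :=
          Relation.ReflTransGen.trans hrest hb
        have heT : e ∈ T := by
          refine ⟨he₀, ⟨heH, ?_⟩, ?_, ?_⟩
          · exact he2 ▸ (hca.trans (he1 ▸ ha))
          · exact he1 ▸ ha
          · exact (Relation.ReflTransGen.single ⟨e, heH, rfl, rfl⟩).trans (he2 ▸ hca)
        have ha' : sieveReach src tgt Hn (src e₀) c' :=
          ha.trans (Relation.ReflTransGen.single ⟨e, heH, he1, he2⟩)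
        exact Relation.ReflTransGen.head ⟨e, heT, he1, he2⟩ (ih ha')
  -- convert reachability into a walk (list of edges)
  have toWalk : ∀ a b : V, Relation.ReflTransGen (fun x y => ∃ e ∈ T, src e = x ∧ tgt e = y) a b →
      ∃ L, sieveWalk src tgt T L a b := by
    intro a b h
    induction h using Relation.ReflTransGen.head_induction_on with
    | refl => exact ⟨[], rfl⟩
    | head h' _ ih =>
        obtain ⟨L, hL⟩ := ih
        obtain ⟨e, heT, h1, h2⟩ := h'
        exact ⟨e :: L, heT, h1, h2 ▸ hL⟩
  have reach_e0_src : ∀ e ∈ T, ∃ L, sieveWalk src tgt T L (src e₀) (src e) := by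
    intro e he
    exact toWalk _ _ (key (src e) he.2.2.2 (src e₀) he.2.2.1 Relation.ReflTransGen.refl)
  have reach_tgt_e0 : ∀ e ∈ T, ∃ L, sieveWalk src tgt T L (tgt e) (src e₀) := by
    intro e he
    refine toWalk _ _ (key (src e₀) Relation.ReflTransGen.refl (tgt e) ?_ ?_)
    · exact he.2.1.2.trans he.2.2.2
    · exact he.2.2.1.trans (Relation.ReflTransGen.single ⟨e, he.2.1.1, rfl, rfl⟩)
  -- build a closed walk through any list of SCC edges
  have build : ∀ (Es : List ι), (∀ e ∈ Es, e ∈ T) →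
      ∃ L, sieveWalk src tgt T L (src e₀) (src e₀) ∧ ∀ e ∈ Es, e ∈ L := by
    intro Es
    induction Es with
    | nil => exact fun _ => ⟨[], rfl, by simp⟩
    | cons e Es ih =>
        intro h
        obtain ⟨L, hL, hmem⟩ := ih (fun f hf => h f (List.mem_cons_of_mem _ hf))
        have heT : e ∈ T := h e List.mem_cons_self
        obtain ⟨P1, hP1⟩ := reach_e0_src e heT
        obtain ⟨P2, hP2⟩ := reach_tgt_e0 e heT
        refine ⟨P1 ++ e :: (P2 ++ L), ?_, ?_⟩
        · exact sieveWalk_append hP1 ⟨heT, rfl, sieveWalk_append hP2 hL⟩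
        · intro f hf
          rcases List.mem_cons.1 hf with h' | h'
          · subst h'; simp
          · have := hmem f h'
            simp [this]
  -- stuckness: every decremented variable is incremented in the same SCC
  have hnoinc : ∀ (X : Var) (e₁ : ι), sieveInside src tgt Hn e₁ → X ∈ Dec e₁ →
      ∃ e, sieveSameC src tgt Hn e₁ e ∧ X ∈ Inc e := by
    intro X e₁ h1 h2
    by_contra hcon
    push_neg at hcon
    refine hstuck (Hn.filter (fun e => ¬ (sieveSameC src tgt Hn e₁ e ∧ X ∈ Dec e)))
      ⟨X, e₁, h1, h2, fun e hse => hcon e hse, fun e => ?_⟩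
    simp [Finset.mem_filter]
  have htrans : ∀ e₁ e₂, sieveSameC src tgt Hn e₀ e₁ → sieveSameC src tgt Hn e₁ e₂ →
      sieveSameC src tgt Hn e₀ e₂ :=
    fun e₁ e₂ h g => ⟨h.1, g.2.1, h.2.2.1.trans g.2.2.1, g.2.2.2.trans h.2.2.2⟩
  -- the full list of SCC edges
  set Es : List ι := (Finset.univ.filter (fun e => e ∈ T)).toList with hEs
  have hEsmem : ∀ e, e ∈ Es ↔ e ∈ T := by
    intro e; simp [hEs, Finset.mem_toList]
  obtain ⟨L, hL, hall⟩ := build Es (fun e he => (hEsmem e).1 he)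
  have he₀L : e₀ ∈ L := hall e₀ ((hEsmem e₀).2 he₀T)
  have hk : 0 < L.length := List.length_pos_iff.2 (List.ne_nil_of_mem he₀L)
  refine ⟨L.length, hk, fun i => L.getD (i % L.length) e₀, ?_, ?_, ?_⟩
  · intro i
    simp [Nat.add_mod_right]
  · intro i
    have hj : i % L.length < L.length := Nat.mod_lt _ hk
    have h2 : (i + 1) % L.length = (i % L.length + 1) % L.length := by
      conv_lhs => rw [Nat.add_mod]
      conv_rhs => rw [Nat.add_mod, Nat.mod_mod_of_dvd i dvd_rfl]
    by_cases hcase : i % L.length + 1 < L.length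
    · have h1 : (i + 1) % L.length = i % L.length + 1 := by
        rw [h2, Nat.mod_eq_of_lt hcase]
      have hc := sieveWalk_chain hL (i % L.length) hcase
      simp only [h1, (show L.getD (i % L.length) e₀ = L.get ⟨i % L.length, hj⟩ from List.getD_eq_get L e₀ ⟨i % L.length, hj⟩), (show L.getD (i % L.length + 1) e₀ = L.get ⟨i % L.length + 1, hcase⟩ from List.getD_eq_get L e₀ ⟨i % L.length + 1, hcase⟩)]
      exact hc
    · have hlast : i % L.length = L.length - 1 := by omega
      have h1 : (i + 1) % L.length = 0 := by
        rw [h2, show i % L.length + 1 = L.length by omega, Nat.mod_self]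
      simp only [h1, (show L.getD (i % L.length) e₀ = L.get ⟨i % L.length, hj⟩ from List.getD_eq_get L e₀ ⟨i % L.length, hj⟩), (show L.getD (0) e₀ = L.get ⟨0, hk⟩ from List.getD_eq_get L e₀ ⟨0, hk⟩)]
      have ht := sieveWalk_tgt hL hk
      have hs := sieveWalk_src hL hk
      rw [show (⟨i % L.length, hj⟩ : Fin L.length) = ⟨L.length - 1, by omega⟩ from
        Fin.ext hlast, ht, hs]
  · intro X ⟨i, hXdec⟩
    have hj : i % L.length < L.length := Nat.mod_lt _ hk
    have hXdec : X ∈ Dec (L.get ⟨i % L.length, hj⟩) := by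
      have h' : X ∈ Dec (L.getD (i % L.length) e₀) := hXdec
      rwa [(show L.getD (i % L.length) e₀ = L.get ⟨i % L.length, hj⟩ from List.getD_eq_get L e₀ ⟨i % L.length, hj⟩)] at h'
    have hciT : L.get ⟨i % L.length, hj⟩ ∈ T :=
      sieveWalk_mem hL _ (L.get_mem _)
    obtain ⟨e', hse, hinc⟩ := hnoinc X _ hciT.2.1 hXdec
    have he'T : e' ∈ T := htrans _ _ hciT hse
    have he'L : e' ∈ L := hall e' ((hEsmem e').2 he'T)
    obtain ⟨j', hj'⟩ := List.mem_iff_get.1 he'L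
    refine ⟨j'.1, ?_⟩
    have hlt : j'.1 % L.length < L.length := Nat.mod_lt _ hk
    show X ∈ Inc (L.getD (j'.1 % L.length) e₀)
    rw [(show L.getD (j'.1 % L.length) e₀ = L.get ⟨j'.1 % L.length, hlt⟩ from List.getD_eq_get L e₀ ⟨j'.1 % L.length, hlt⟩),
      show (⟨j'.1 % L.length, hlt⟩ : Fin L.length) = j' from Fin.ext (Nat.mod_eq_of_lt j'.2),
      hj']
    exact hinc
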